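/- If X is a finite, nonempty type and f : X → X × Bool is any function, then there exists an element of X × Bool that is not in the range of f. (Strong dual pigeonhole principle for X × 2, conjectured by Bénabou and Loiseau.) -/

import Mathlib

/-- Strong dual pigeonhole principle for `X × 2`: if `X` is finite and nonempty, then
for any `f : X → X × Bool` some element of `X × Bool` is outside the range of `f`. -/
theorem strong_dual_pigeonhole_prod {X : Type*} [Finite X] [Nonempty X]
    (f : X → X × Bool) : ∃ y : X × Bool, y ∉ Set.range f := by
  by_contra h
  push_neg at h
  have hsurj : Function.Surjective f := fun y => h y
  have hle := Nat.card_le_card_of_surjective f hsurj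
  have : Nat.card (X × Bool) = Nat.card X * 2 := by
    simp [Nat.card_prod]
  have hpos : 0 < Nat.card X := Nat.card_pos
  omega
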